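/- Assume that the compositional inverse ψ = φ^⟨-1⟩ of φ satisfies ψ(t) = t·h(ψ(t)). Then for every nonnegative integer s and all 1 ≤ k ≤ n, [A^s]_{k,n} = (a_k/a_n)·C(n,k)·(d/dt)^{n-k}_{t=0}[ (g(ψ(t)))^s ], where C(n,k) is the binomial coefficient. -/

import Mathlib

open PowerSeries Finset

noncomputable section

/-- Product of two infinite matrices of complex numbers (indexed by positive integers,
upper triangular): `[A·B]_{k,n} = ∑_{j=k}^{n} [A]_{k,j}·[B]_{j,n}`. -/
def triMul (A B : ℕ → ℕ → ℂ) : ℕ → ℕ → ℂ :=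
  fun k n => ∑ j ∈ Finset.Icc k n, A k j * B j n

/-- The identity matrix. -/
def triId : ℕ → ℕ → ℂ := fun k n => if k = n then 1 else 0

/-- Powers of a matrix: `A^0 = I`, `A^{s+1} = A^s · A`. -/
def triPow (A : ℕ → ℕ → ℂ) : ℕ → ℕ → ℕ → ℂ
  | 0 => triId
  | s + 1 => triMul (triPow A s) A

/-- Composition `F ∘ G` of formal power series (intended for `G` with zero
constant coefficient): the coefficient of `t^n` is `∑_{j=0}^{n} F_j · [t^n](G^j)`. -/
def psComp (F G : PowerSeries ℂ) : PowerSeries ℂ :=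
  PowerSeries.mk fun n =>
    ∑ j ∈ Finset.range (n + 1), (PowerSeries.coeff j F) * (PowerSeries.coeff n (G ^ j))

/-- Iterated composition: `φ^⟨0⟩ = t`, `φ^⟨s+1⟩ = φ^⟨s⟩ ∘ φ`. -/
def iterComp (φ : PowerSeries ℂ) : ℕ → PowerSeries ℂ
  | 0 => PowerSeries.X
  | s + 1 => psComp (iterComp φ s) φ

namespace Stmt7Aux

lemma coeff_psComp (F G : PowerSeries ℂ) (n : ℕ) :
    coeff n (psComp F G) = ∑ j ∈ range (n + 1), coeff j F * coeff n (G ^ j) := by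
  simp [psComp]

lemma coeff_pow_eq_zero' {G : PowerSeries ℂ} (hG : constantCoeff G = 0)
    {n j : ℕ} (h : n < j) : coeff n (G ^ j) = 0 :=
  X_pow_dvd_iff.mp (pow_dvd_pow_of_dvd (X_dvd_iff.mpr hG) j) n h

lemma coeff_psComp_of_le {G : PowerSeries ℂ} (hG : constantCoeff G = 0) (F : PowerSeries ℂ)
    {n N : ℕ} (hnN : n ≤ N) :
    coeff n (psComp F G) = ∑ j ∈ range (N + 1), coeff j F * coeff n (G ^ j) := by
  rw [coeff_psComp]
  apply Finset.sum_subset (Finset.range_subset_range.mpr (by omega))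
  intro j hj hj'
  rw [Finset.mem_range] at hj hj'
  rw [coeff_pow_eq_zero' hG (by omega), mul_zero]

lemma coeff_eval₂_trunc {G : PowerSeries ℂ} (hG : constantCoeff G = 0) (F : PowerSeries ℂ)
    {n N : ℕ} (hnN : n ≤ N) :
    coeff n ((trunc (N + 1) F).eval₂ C G) = coeff n (psComp F G) := by
  rw [eval₂_trunc_eq_sum_range, map_sum, coeff_psComp_of_le hG F hnN]
  exact Finset.sum_congr rfl fun i _ => by rw [coeff_C_mul]

lemma psComp_sub_eval₂_dvd {G : PowerSeries ℂ} (hG : constantCoeff G = 0) (F : PowerSeries ℂ)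
    (n : ℕ) :
    (X : PowerSeries ℂ) ^ (n + 1) ∣ psComp F G - (trunc (n + 1) F).eval₂ C G := by
  rw [X_pow_dvd_iff]
  intro m hm
  rw [map_sub, coeff_eval₂_trunc hG F (by omega), sub_self]

lemma dvd_mul_sub_mul {R : Type*} [CommRing R] {x a a' b b' : R} (ha : x ∣ a - a')
    (hb : x ∣ b - b') : x ∣ a * b - a' * b' := by
  have : a * b - a' * b' = a * (b - b') + (a - a') * b' := by ring
  rw [this]
  exact dvd_add (hb.mul_left a) (ha.mul_right b')

lemma coeff_eq_of_dvd {a b : PowerSeries ℂ} {n : ℕ}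
    (h : (X : PowerSeries ℂ) ^ (n + 1) ∣ a - b) : coeff n a = coeff n b := by
  have := X_pow_dvd_iff.mp h n (Nat.lt_succ_self n)
  rw [map_sub] at this
  exact sub_eq_zero.mp this

lemma coeff_eq_zero_of_X_pow_dvd {a : PowerSeries ℂ} {n : ℕ}
    (h : (X : PowerSeries ℂ) ^ (n + 1) ∣ a) : coeff n a = 0 := by
  have := X_pow_dvd_iff.mp h n (Nat.lt_succ_self n)
  exact this

lemma eval₂_dvd {G : PowerSeries ℂ} (hG : constantCoeff G = 0) {m : ℕ} {r : Polynomial ℂ}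
    (hr : (Polynomial.X : Polynomial ℂ) ^ m ∣ r) :
    (X : PowerSeries ℂ) ^ m ∣ r.eval₂ C G := by
  obtain ⟨s, rfl⟩ := hr
  rw [Polynomial.eval₂_mul, Polynomial.eval₂_pow, Polynomial.eval₂_X]
  exact ((pow_dvd_pow_of_dvd (X_dvd_iff.mpr hG) m).mul_right _)

lemma psComp_mul {G : PowerSeries ℂ} (hG : constantCoeff G = 0) (F₁ F₂ : PowerSeries ℂ) :
    psComp (F₁ * F₂) G = psComp F₁ G * psComp F₂ G := by
  ext n
  set p := trunc (n + 1) F₁ with hp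
  set q := trunc (n + 1) F₂ with hq
  have h1 : coeff n (psComp (F₁ * F₂) G) = coeff n ((trunc (n+1) (F₁ * F₂)).eval₂ C G) :=
    (coeff_eval₂_trunc hG _ le_rfl).symm
  have h2 : trunc (n + 1) (F₁ * F₂) = trunc (n + 1) ((p * q : Polynomial ℂ) : PowerSeries ℂ) := by
    rw [Polynomial.coe_mul, hp, hq, trunc_trunc_mul_trunc]
  have h3 : (X : PowerSeries ℂ) ^ (n + 1) ∣
      (trunc (n + 1) ((p * q : Polynomial ℂ) : PowerSeries ℂ)).eval₂ C G
        - (p * q).eval₂ C G := by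
    rw [← Polynomial.eval₂_sub]
    apply eval₂_dvd hG
    rw [Polynomial.X_pow_dvd_iff]
    intro d hd
    rw [Polynomial.coeff_sub, coeff_trunc, if_pos hd, Polynomial.coeff_coe, sub_self]
  have h4 : (p * q).eval₂ C G = p.eval₂ C G * q.eval₂ C G :=
    Polynomial.eval₂_mul _ _
  have h5 : (X : PowerSeries ℂ) ^ (n + 1) ∣
      p.eval₂ C G * q.eval₂ C G - psComp F₁ G * psComp F₂ G := by
    apply dvd_mul_sub_mul
    · exact dvd_sub_comm.mp (psComp_sub_eval₂_dvd hG F₁ n)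
    · exact dvd_sub_comm.mp (psComp_sub_eval₂_dvd hG F₂ n)
  rw [h1, h2, coeff_eq_of_dvd h3, h4, coeff_eq_of_dvd h5]

lemma psComp_one (G : PowerSeries ℂ) : psComp 1 G = 1 := by
  ext n
  rw [coeff_psComp]
  rw [Finset.sum_eq_single 0]
  · simp
  · intro j hj hj0
    rw [coeff_one, if_neg hj0, zero_mul]
  · simp

lemma psComp_pow {G : PowerSeries ℂ} (hG : constantCoeff G = 0) (F : PowerSeries ℂ) (m : ℕ) :
    psComp (F ^ m) G = (psComp F G) ^ m := by
  induction m with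
  | zero => simp [psComp_one]
  | succ m ih => rw [pow_succ, psComp_mul hG, ih, pow_succ]

lemma psComp_C (c : ℂ) (G : PowerSeries ℂ) : psComp (C c) G = C c := by
  ext n
  rw [coeff_psComp]
  rw [Finset.sum_eq_single 0]
  · simp [coeff_C, coeff_one]
  · intro j hj hj0
    rw [coeff_C, if_neg hj0, zero_mul]
  · simp

lemma psComp_add (F₁ F₂ G : PowerSeries ℂ) :
    psComp (F₁ + F₂) G = psComp F₁ G + psComp F₂ G := by
  ext n
  rw [map_add, coeff_psComp, coeff_psComp, coeff_psComp, ← Finset.sum_add_distrib]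
  exact Finset.sum_congr rfl fun j _ => by rw [map_add, add_mul]

lemma psComp_X_left {G : PowerSeries ℂ} (hG : constantCoeff G = 0) :
    psComp X G = G := by
  ext n
  rw [coeff_psComp]
  rcases n with _ | n
  · simp [hG, coeff_X]
  · rw [Finset.sum_eq_single 1]
    · simp
    · intro j hj hj1
      rw [coeff_X, if_neg hj1, zero_mul]
    · intro h
      exfalso
      exact h (Finset.mem_range.mpr (by omega))

lemma psComp_X_right (F : PowerSeries ℂ) : psComp F X = F := by
  ext n
  rw [coeff_psComp]
  rw [Finset.sum_eq_single n]
  · rw [coeff_X_pow, if_pos rfl, mul_one]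
  · intro j hj hjn
    rw [coeff_X_pow, if_neg (fun h => hjn h.symm), mul_zero]
  · intro h
    exfalso
    exact h (Finset.mem_range.mpr (by omega))

lemma constantCoeff_psComp (G H : PowerSeries ℂ) :
    constantCoeff (psComp G H) = constantCoeff G := by
  rw [← coeff_zero_eq_constantCoeff_apply, coeff_psComp]
  simp

lemma psComp_eval₂ {H : PowerSeries ℂ} (hH : constantCoeff H = 0) (G : PowerSeries ℂ)
    (p : Polynomial ℂ) :
    psComp (p.eval₂ C G) H = p.eval₂ C (psComp G H) := by
  induction p using Polynomial.induction_on' with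
  | add p q hp hq => rw [Polynomial.eval₂_add, psComp_add, hp, hq, Polynomial.eval₂_add]
  | monomial i a =>
    rw [Polynomial.eval₂_monomial, Polynomial.eval₂_monomial, psComp_mul hH,
      psComp_C, psComp_pow hH]

lemma psComp_assoc {G H : PowerSeries ℂ} (hG : constantCoeff G = 0)
    (hH : constantCoeff H = 0) (F : PowerSeries ℂ) :
    psComp (psComp F G) H = psComp F (psComp G H) := by
  ext n
  have hP : constantCoeff (psComp G H) = 0 := by rw [constantCoeff_psComp]; exact hG
  have key : ∀ m, m ≤ n → coeff m (psComp F G) =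
      coeff m ((trunc (n + 1) F).eval₂ C G) := fun m hm =>
    (coeff_eval₂_trunc hG F hm).symm
  calc coeff n (psComp (psComp F G) H)
      = coeff n (psComp ((trunc (n + 1) F).eval₂ C G) H) := by
        rw [coeff_psComp, coeff_psComp]
        refine Finset.sum_congr rfl fun j hj => ?_
        rw [key j (by rw [Finset.mem_range] at hj; omega)]
    _ = coeff n ((trunc (n + 1) F).eval₂ C (psComp G H)) := by rw [psComp_eval₂ hH]
    _ = coeff n (psComp F (psComp G H)) := coeff_eval₂_trunc hP F le_rfl

lemma coeff_derivativeFun' (f : PowerSeries ℂ) (n : ℕ) :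
    coeff n (derivativeFun f) = coeff (n + 1) f * (n + 1) :=
  coeff_derivative f n

lemma derivativeFun_C' (r : ℂ) : derivativeFun (C r : PowerSeries ℂ) = 0 :=
  derivative_C

lemma derivativeFun_zero : derivativeFun (0 : PowerSeries ℂ) = 0 := by
  ext n
  rw [coeff_derivativeFun']
  simp

lemma derivativeFun_X : derivativeFun (X : PowerSeries ℂ) = 1 := by
  ext n
  rw [coeff_derivativeFun', coeff_X]
  rcases n with _ | n <;> simp [coeff_one]

lemma derivativeFun_sum {ι : Type*} (s : Finset ι) (f : ι → PowerSeries ℂ) :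
    derivativeFun (∑ i ∈ s, f i) = ∑ i ∈ s, derivativeFun (f i) := by
  classical
  induction s using Finset.induction_on with
  | empty => simp [derivativeFun_zero]
  | insert _ _ h ih => rw [Finset.sum_insert h, Finset.sum_insert h, derivativeFun_add, ih]

lemma derivativeFun_C_mul (c : ℂ) (F : PowerSeries ℂ) :
    derivativeFun (C c * F) = C c * derivativeFun F := by
  rw [derivativeFun_mul, derivativeFun_C', smul_zero, add_zero, smul_eq_mul]

lemma derivativeFun_pow (F : PowerSeries ℂ) (m : ℕ) :
    derivativeFun (F ^ (m + 1)) = ((m : PowerSeries ℂ) + 1) * F ^ m * derivativeFun F := by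
  induction m with
  | zero => simp [pow_one]
  | succ m ih =>
    rw [pow_succ, derivativeFun_mul, ih, smul_eq_mul, smul_eq_mul]
    push_cast
    ring

lemma natCast_eq_C (m : ℕ) : ((m : PowerSeries ℂ)) = C (m : ℂ) := by
  rw [map_natCast]

lemma natCast_add_one_eq_C (j : ℕ) :
    ((j : PowerSeries ℂ) + 1) = C ((j : ℂ) + 1) := by
  rw [map_add, map_natCast, map_one]

/-- The key monomial computation for Lagrange inversion. -/
lemma key_monomial {φ h : PowerSeries ℂ} (hφh : φ * h = X) (hφ0 : constantCoeff φ = 0)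
    (n i : ℕ) (hi : i ≤ n + 1) :
    coeff n (h ^ (n + 1) * derivativeFun (φ ^ i)) =
      if i = n + 1 then ((n : ℂ) + 1) else 0 := by
  have hDX : derivativeFun (φ * h) = 1 := by rw [hφh, derivativeFun_X]
  have hhDφ : h * derivativeFun φ = 1 - φ * derivativeFun h := by
    rw [derivativeFun_mul, smul_eq_mul, smul_eq_mul] at hDX
    linear_combination hDX
  rcases i with _ | j
  · rw [pow_zero, derivativeFun_one, mul_zero, map_zero, if_neg (by omega)]
  · have hD : derivativeFun (φ ^ (j + 1)) = ((j : PowerSeries ℂ) + 1) * φ ^ j * derivativeFun φ :=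
      derivativeFun_pow φ j
    rcases Nat.lt_or_ge j (n : ℕ) with hj | hj
    · -- case j < n : result is 0
      obtain ⟨r, hr⟩ : ∃ r, n = j + (r + 1) := ⟨n - j - 1, by omega⟩
      have hsplit : h ^ (n + 1) * derivativeFun (φ ^ (j + 1)) =
          ((j : PowerSeries ℂ) + 1) *
            (X ^ j * (h ^ (r + 1) - X * (h ^ r * derivativeFun h))) := by
        rw [hD]
        have e1 : h ^ (n + 1) * (((j : PowerSeries ℂ) + 1) * φ ^ j * derivativeFun φ) =
            ((j : PowerSeries ℂ) + 1) * ((φ * h) ^ j * (h ^ (r + 1) *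
              (h * derivativeFun φ))) := by
          rw [mul_pow, hr]
          ring
        rw [e1, hφh, hhDφ]
        have e2 : h ^ (r + 1) * (1 - φ * derivativeFun h) =
            h ^ (r + 1) - (φ * h) * (h ^ r * derivativeFun h) := by ring
        rw [e2, hφh]
      rw [hsplit, natCast_add_one_eq_C, coeff_C_mul, coeff_X_pow_mul', if_pos (by omega),
        show n - j = r + 1 from by omega]
      have hXc : coeff (r + 1) (X * (h ^ r * derivativeFun h)) =
          coeff r (h ^ r * derivativeFun h) := by
        rw [← pow_one (X : PowerSeries ℂ), coeff_X_pow_mul]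
      have hDh : derivativeFun (h ^ (r + 1)) =
          ((r : PowerSeries ℂ) + 1) * h ^ r * derivativeFun h := derivativeFun_pow h r
      have h1 : coeff r (derivativeFun (h ^ (r + 1))) =
          coeff (r + 1) (h ^ (r + 1)) * ((r : ℂ) + 1) := by
        rw [coeff_derivativeFun']
      have h2 : coeff r (derivativeFun (h ^ (r + 1))) =
          ((r : ℂ) + 1) * coeff r (h ^ r * derivativeFun h) := by
        rw [hDh, natCast_add_one_eq_C, mul_assoc, coeff_C_mul]
      have hr1 : ((r : ℂ) + 1) ≠ 0 := Nat.cast_add_one_ne_zero r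
      have hAB : coeff (r + 1) (h ^ (r + 1)) = coeff r (h ^ r * derivativeFun h) :=
        mul_left_cancel₀ hr1 (by linear_combination h1.symm.trans h2)
      rw [map_sub, hXc, hAB, sub_self, mul_zero, if_neg (by omega)]
    · -- case j = n
      have hjn : j = n := by omega
      subst hjn
      rw [if_pos rfl, hD]
      have e1 : h ^ (j + 1) * (((j : PowerSeries ℂ) + 1) * φ ^ j * derivativeFun φ) =
          ((j : PowerSeries ℂ) + 1) * ((φ * h) ^ j * (h * derivativeFun φ)) := by
        rw [mul_pow]
        ring
      rw [e1, hφh, hhDφ, natCast_add_one_eq_C, coeff_C_mul, coeff_X_pow_mul', if_pos le_rfl,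
        Nat.sub_self, map_sub]
      have hc0 : coeff 0 (φ * derivativeFun h) = 0 := by
        rw [coeff_zero_eq_constantCoeff_apply, map_mul, hφ0, zero_mul]
      rw [hc0, coeff_zero_eq_constantCoeff_apply, map_one, sub_zero, mul_one]

/-- Lagrange inversion, general form. -/
lemma key_lagrange {φ h : PowerSeries ℂ} (hφh : φ * h = X) (hφ0 : constantCoeff φ = 0)
    (n : ℕ) (W : PowerSeries ℂ) :
    coeff n (h ^ (n + 1) * derivativeFun (psComp W φ)) = ((n : ℂ) + 1) * coeff (n + 1) W := by
  obtain ⟨V, hV⟩ := psComp_sub_eval₂_dvd hφ0 W (n + 1)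
  set E := (trunc (n + 2) W).eval₂ C φ with hE
  have hWE : psComp W φ = E + X ^ (n + 2) * V := by
    rw [← hV]; ring
  have step1 : coeff n (h ^ (n + 1) * derivativeFun (psComp W φ)) =
      coeff n (h ^ (n + 1) * derivativeFun E) := by
    rw [hWE, derivativeFun_add, mul_add, map_add]
    have hdvd : (X : PowerSeries ℂ) ^ (n + 1) ∣ derivativeFun (X ^ (n + 2) * V) := by
      rw [derivativeFun_mul, smul_eq_mul, smul_eq_mul]
      apply dvd_add
      · exact (pow_dvd_pow (X : PowerSeries ℂ) (by omega : n + 1 ≤ n + 2)).mul_right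
          (derivativeFun V)
      · have hDX2 : derivativeFun ((X : PowerSeries ℂ) ^ (n + 2)) =
            (((n + 1 : ℕ) : PowerSeries ℂ) + 1) * X ^ (n + 1) * 1 := by
          rw [show n + 2 = (n + 1) + 1 from rfl, derivativeFun_pow, derivativeFun_X]
        rw [hDX2, mul_one]
        exact (dvd_mul_left _ _).mul_left V
    have hz : coeff n (h ^ (n + 1) * derivativeFun (X ^ (n + 2) * V)) = 0 :=
      coeff_eq_zero_of_X_pow_dvd (hdvd.mul_left _)
    rw [hz, add_zero]
  -- step 2 : compute with E
  have hEsum : E = ∑ i ∈ range (n + 2), C (coeff i W) * φ ^ i := by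
    rw [hE, eval₂_trunc_eq_sum_range]
  have step2 : coeff n (h ^ (n + 1) * derivativeFun E) =
      ∑ i ∈ range (n + 2), coeff i W * coeff n (h ^ (n + 1) * derivativeFun (φ ^ i)) := by
    rw [hEsum, derivativeFun_sum, Finset.mul_sum, map_sum]
    refine Finset.sum_congr rfl fun i _ => ?_
    rw [derivativeFun_C_mul]
    rw [show h ^ (n + 1) * (C (coeff i W) * derivativeFun (φ ^ i)) =
      C (coeff i W) * (h ^ (n + 1) * derivativeFun (φ ^ i)) from by ring, coeff_C_mul]
  rw [step1, step2]
  rw [Finset.sum_eq_single (n + 1)]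
  · rw [key_monomial hφh hφ0 n (n + 1) le_rfl, if_pos rfl, mul_comm]
  · intro i hi hine
    rw [Finset.mem_range] at hi
    rw [key_monomial hφh hφ0 n i (by omega), if_neg hine, mul_zero]
  · intro habs
    exact absurd (Finset.mem_range.mpr (by omega)) habs

end Stmt7Aux

open Stmt7Aux in
/-- Corollary: if the compositional inverse `ψ` of `φ` satisfies `ψ(t) = t·h(ψ(t))`, then
`[A^s]_{k,n} = (a_k/a_n)·C(n,k)·(d/dt)^{n-k}_{t=0}[(g(ψ(t)))^s]`. -/
theorem stmt7 (a : ℕ → ℂ) (ha : ∀ n, 1 ≤ n → a n ≠ 0)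
    (φ g h : PowerSeries ℂ)
    (hφ0 : constantCoeff φ = 0)
    (hne : constantCoeff (derivativeFun φ) * constantCoeff g * constantCoeff h ≠ 0)
    (ψ : PowerSeries ℂ) (hψ0 : constantCoeff ψ = 0)
    (hψφ : psComp ψ φ = PowerSeries.X) (hφψ : psComp φ ψ = PowerSeries.X)
    (hψ : ψ = PowerSeries.X * psComp h ψ)
    (A : ℕ → ℕ → ℂ)
    (hAtri : ∀ k n, n < k → A k n = 0)
    (hA : ∀ k n, 1 ≤ k → k ≤ n →
      A k n = a k / a n * (1 / k.factorial) *
        (((n - 1).factorial : ℂ) * coeff (n - 1) (h ^ n * derivativeFun (φ ^ k * g))))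
    (s : ℕ) (k n : ℕ) (hk : 1 ≤ k) (hkn : k ≤ n) :
    triPow A s k n = a k / a n * (n.choose k : ℂ) *
      (((n - k).factorial : ℂ) * coeff (n - k) ((psComp g ψ) ^ s)) := by
  have hφh : φ * h = X := by
    have h1 : psComp ψ φ = psComp (X * psComp h ψ) φ := by rw [← hψ]
    rw [hψφ, psComp_mul hφ0, psComp_X_left hφ0, psComp_assoc hψ0 hφ0, hψφ,
      psComp_X_right] at h1
    exact h1.symm
  have hgG : psComp (psComp g ψ) φ = g := by
    rw [psComp_assoc hψ0 hφ0, hψφ, psComp_X_right]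
  have key : ∀ (m j : ℕ), 1 ≤ j → j ≤ m + 1 →
      coeff m (h ^ (m + 1) * derivativeFun (φ ^ j * g)) =
        ((m : ℂ) + 1) * coeff (m + 1 - j) (psComp g ψ) := by
    intro m j hj1 hjm
    have hW : φ ^ j * g = psComp (X ^ j * psComp g ψ) φ := by
      rw [psComp_mul hφ0, psComp_pow hφ0, psComp_X_left hφ0, hgG]
    rw [hW, key_lagrange hφh hφ0 m _]
    congr 1
    rw [coeff_X_pow_mul', if_pos hjm]
  induction s generalizing k n hk hkn with
  | zero =>
    show triId k n = _
    rcases eq_or_lt_of_le hkn with rfl | hlt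
    · rw [pow_zero, Nat.sub_self, Nat.choose_self, Nat.factorial_zero,
        coeff_zero_eq_constantCoeff_apply, map_one, div_self (ha k hk)]
      simp [triId]
    · rw [pow_zero, coeff_one, if_neg (by omega)]
      simp [triId, Nat.ne_of_lt hlt]
  | succ s ih =>
    have hn1 : 1 ≤ n := le_trans hk hkn
    obtain ⟨m, rfl⟩ : ∃ m, n = m + 1 := ⟨n - 1, by omega⟩
    show (∑ j ∈ Finset.Icc k (m + 1), triPow A s k j * A j (m + 1)) = _
    have hfk : (k.factorial : ℂ) ≠ 0 := Nat.cast_ne_zero.mpr (Nat.factorial_ne_zero k)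
    have hstep : ∀ j ∈ Finset.Icc k (m + 1), triPow A s k j * A j (m + 1) =
        a k / a (m + 1) * ((m + 1).choose k : ℂ) * ((m + 1 - k).factorial : ℂ) *
          (coeff (j - k) ((psComp g ψ) ^ s) * coeff (m + 1 - j) (psComp g ψ)) := by
      intro j hj
      rw [Finset.mem_Icc] at hj
      have hj1 : 1 ≤ j := le_trans hk hj.1
      have haj : a j ≠ 0 := ha j hj1
      have ham : a (m + 1) ≠ 0 := ha (m + 1) (by omega)
      have hfj : (j.factorial : ℂ) ≠ 0 := Nat.cast_ne_zero.mpr (Nat.factorial_ne_zero j)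
      rw [ih k j hk hj.1, hA j (m + 1) hj1 hj.2, show m + 1 - 1 = m from rfl,
        key m j hj1 hj.2]
      have h1 : (j.choose k : ℂ) * (k.factorial : ℂ) * ((j - k).factorial : ℂ) =
          (j.factorial : ℂ) := by
        exact_mod_cast congrArg (Nat.cast (R := ℂ))
          (Nat.choose_mul_factorial_mul_factorial hj.1)
      have h2 : ((m + 1).choose k : ℂ) * (k.factorial : ℂ) * ((m + 1 - k).factorial : ℂ) =
          ((m + 1).factorial : ℂ) := by
        exact_mod_cast congrArg (Nat.cast (R := ℂ))
          (Nat.choose_mul_factorial_mul_factorial hkn)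
      have h3 : ((m + 1).factorial : ℂ) = ((m : ℂ) + 1) * (m.factorial : ℂ) := by
        rw [Nat.factorial_succ]
        push_cast
        ring
      have hS : (k.factorial : ℂ) * ((j.choose k : ℂ) * ((j - k).factorial : ℂ) *
            (((m : ℂ) + 1) * (m.factorial : ℂ))) =
          (k.factorial : ℂ) * (((m + 1).choose k : ℂ) * ((m + 1 - k).factorial : ℂ) *
            (j.factorial : ℂ)) := by
        linear_combination (((m : ℂ) + 1) * (m.factorial : ℂ)) * h1 -
          (j.factorial : ℂ) * h2 - (j.factorial : ℂ) * h3
      have hS' : (j.choose k : ℂ) * ((j - k).factorial : ℂ) *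
            (((m : ℂ) + 1) * (m.factorial : ℂ)) =
          ((m + 1).choose k : ℂ) * ((m + 1 - k).factorial : ℂ) * (j.factorial : ℂ) :=
        mul_left_cancel₀ hfk hS
      set c := coeff (j - k) ((psComp g ψ) ^ s) with hc
      set d := coeff (m + 1 - j) (psComp g ψ) with hd
      field_simp
      linear_combination (a k * c * d) * hS'
    rw [Finset.sum_congr rfl hstep, ← Finset.mul_sum]
    have hsum : ∑ j ∈ Finset.Icc k (m + 1),
        coeff (j - k) ((psComp g ψ) ^ s) * coeff (m + 1 - j) (psComp g ψ) =
        coeff (m + 1 - k) ((psComp g ψ) ^ (s + 1)) := by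
      rw [pow_succ, coeff_mul]
      apply Finset.sum_nbij' (i := fun j => (j - k, m + 1 - j)) (j := fun p => p.1 + k)
      · intro x hx
        rw [Finset.mem_Icc] at hx
        rw [Finset.HasAntidiagonal.mem_antidiagonal]
        omega
      · intro p hp
        rw [Finset.HasAntidiagonal.mem_antidiagonal] at hp
        rw [Finset.mem_Icc]
        omega
      · intro x hx
        rw [Finset.mem_Icc] at hx
        simp
        omega
      · intro p hp
        rw [Finset.HasAntidiagonal.mem_antidiagonal] at hp
        ext <;> simp <;> omega
      · intro x hx
        rfl
    rw [hsum]
    ring
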